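/- Let β ∈ (0, 1] and R ≥ 0 be real numbers, and let (e_k)_{k ≥ 0} and (L_k)_{k ≥ 0} be sequences of nonnegative reals such that for every k ≥ 0, e_{k+1} ≤ (1 − β·ξ_k)·e_k + (ξ_k²·L_k/2)·R², where ξ_k := 2/(β·k + 2). Then for every t ≥ 1, e_t ≤ 2·L̄_t·R²/(β²·t + β) + 4·(1 − β)·e_0/(β²·t² + β·t), where L̄_t := (Σ_{k=0}^{t−1} L_k)/t. -/

import Mathlib

lemma stmt_14_aux (β R : ℝ) (hβ0 : 0 < β) (hβ1 : β ≤ 1) (hR : 0 ≤ R)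
    (e L : ℕ → ℝ) (he : ∀ k, 0 ≤ e k) (hL : ∀ k, 0 ≤ L k)
    (hrec : ∀ k : ℕ, e (k + 1) ≤ (1 - β * (2 / (β * k + 2))) * e k
      + (2 / (β * k + 2)) ^ 2 * L k / 2 * R ^ 2) :
    ∀ t : ℕ, (((t : ℝ) - 2) * β + 2) * (((t : ℝ) - 1) * β + 2) / 2 * e t
      ≤ (1 - β) * (2 - β) * e 0 + R ^ 2 * ∑ k ∈ Finset.range t, L k := by
  intro t
  induction t with
  | zero => simp; ring_nf; nlinarith [he 0]
  | succ n ih =>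
    have hD : (0 : ℝ) < β * n + 2 := by positivity
    have hn0 : (0 : ℝ) ≤ (n : ℝ) := Nat.cast_nonneg n
    have hnb : (0 : ℝ) ≤ (n : ℝ) * β := mul_nonneg hn0 hβ0.le
    have hA1 : (0 : ℝ) ≤ (((n : ℝ) + 1 - 2) * β + 2) * (((n : ℝ) + 1 - 1) * β + 2) / 2 := by
      have f1 : (0 : ℝ) ≤ ((n : ℝ) + 1 - 2) * β + 2 := by nlinarith
      have f2 : (0 : ℝ) ≤ ((n : ℝ) + 1 - 1) * β + 2 := by nlinarith
      positivity
    have h1 : (((n : ℝ) + 1 - 2) * β + 2) * (((n : ℝ) + 1 - 1) * β + 2) / 2 * e (n + 1)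
        ≤ (((n : ℝ) + 1 - 2) * β + 2) * (((n : ℝ) + 1 - 1) * β + 2) / 2 *
          ((1 - β * (2 / (β * n + 2))) * e n
            + (2 / (β * n + 2)) ^ 2 * L n / 2 * R ^ 2) :=
      mul_le_mul_of_nonneg_left (hrec n) hA1
    have h2 : (((n : ℝ) + 1 - 2) * β + 2) * (((n : ℝ) + 1 - 1) * β + 2) / 2 *
          ((1 - β * (2 / (β * n + 2))) * e n
            + (2 / (β * n + 2)) ^ 2 * L n / 2 * R ^ 2)
        = (((n : ℝ) - 2) * β + 2) * (((n : ℝ) - 1) * β + 2) / 2 * e n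
          + ((((n : ℝ) - 1) * β + 2) / (β * n + 2)) * (L n * R ^ 2) := by
      field_simp
      ring
    have h3 : ((((n : ℝ) - 1) * β + 2) / (β * n + 2)) * (L n * R ^ 2) ≤ L n * R ^ 2 := by
      have hc : (((n : ℝ) - 1) * β + 2) / (β * n + 2) ≤ 1 := by
        rw [div_le_one hD]; nlinarith
      have hx : (0 : ℝ) ≤ L n * R ^ 2 := mul_nonneg (hL n) (sq_nonneg R)
      nlinarith
    have hsum : ∑ k ∈ Finset.range (n + 1), L k = (∑ k ∈ Finset.range n, L k) + L n :=
      Finset.sum_range_succ L n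
    push_cast
    push_cast at h1 h2
    rw [hsum]
    nlinarith [h1, h2, h3, ih]

/-- Core recursion of the `O(1/t)` rate of backtracking Matching Pursuit on convex
objectives, with weights `ξ_k = 2/(β·k + 2)`. -/
theorem stmt_14 (β R : ℝ) (hβ : β ∈ Set.Ioc (0 : ℝ) 1) (hR : 0 ≤ R)
    (e L : ℕ → ℝ) (he : ∀ k, 0 ≤ e k) (hL : ∀ k, 0 ≤ L k)
    (hrec : ∀ k : ℕ, e (k + 1) ≤ (1 - β * (2 / (β * k + 2))) * e k
      + (2 / (β * k + 2)) ^ 2 * L k / 2 * R ^ 2)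
    (t : ℕ) (ht : 1 ≤ t) :
    e t ≤ 2 * ((∑ k ∈ Finset.range t, L k) / t) * R ^ 2 / (β ^ 2 * t + β)
      + 4 * (1 - β) * e 0 / (β ^ 2 * (t : ℝ) ^ 2 + β * t) := by
  obtain ⟨hβ0, hβ1⟩ := hβ
  have key := stmt_14_aux β R hβ0 hβ1 hR e L he hL hrec t
  have ht' : (1 : ℝ) ≤ (t : ℝ) := by exact_mod_cast ht
  have ht0 : (0 : ℝ) < (t : ℝ) := by linarith
  have hP : (0 : ℝ) < β ^ 2 * (t : ℝ) ^ 2 + β * t := by nlinarith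
  have hden : (0 : ℝ) < β ^ 2 * (t : ℝ) + β := by nlinarith
  have hS : (0 : ℝ) ≤ ∑ k ∈ Finset.range t, L k := Finset.sum_nonneg fun k _ => hL k
  have hgoal : 2 * ((∑ k ∈ Finset.range t, L k) / t) * R ^ 2 / (β ^ 2 * t + β)
      + 4 * (1 - β) * e 0 / (β ^ 2 * (t : ℝ) ^ 2 + β * t)
      = (2 * R ^ 2 * (∑ k ∈ Finset.range t, L k) + 4 * (1 - β) * e 0)
        / (β ^ 2 * (t : ℝ) ^ 2 + β * t) := by
    field_simp
  have hPA : β ^ 2 * (t : ℝ) ^ 2 + β * t ≤ (((t : ℝ) - 2) * β + 2) * (((t : ℝ) - 1) * β + 2) := by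
    nlinarith [mul_nonneg (mul_nonneg hβ0.le ht0.le) (by linarith : (0:ℝ) ≤ 1 - β),
      mul_nonneg (by linarith : (0:ℝ) ≤ 1 - β) (by linarith : (0:ℝ) ≤ 2 - β)]
  have hmul := mul_le_mul_of_nonneg_right hPA (he t)
  rw [hgoal, le_div_iff₀ hP]
  nlinarith [key, he t, he 0, hmul, mul_nonneg (mul_nonneg hβ0.le (by linarith : (0:ℝ) ≤ 1 - β)) (he 0)]
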